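/- Suppose ⟦·⟧ is a compositional encoding of the λ-calculus, R is a congruence on target terms, ⟦·⟧ and R validate rule β, ⟦M⟧ R ⟦Ω⟧ for all unsolvables M of order 0, and ⟦M⟧ R ⟦Ω⟧ for all unsolvables M of order ω. Then ⟦M⟧ R ⟦Ω⟧ for every unsolvable term M (of any order n with 0 ≤ n ≤ ω). -/

import Mathlib

/-- Untyped λ-terms in de Bruijn representation. -/
inductive Lam : Type
  | var : ℕ → Lam
  | abs : Lam → Lam
  | app : Lam → Lam → Lam

namespace Lam

/-- Shift free indices ≥ `k` up by `d`. -/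
def shift (d : ℕ) : ℕ → Lam → Lam
  | k, var n => if n < k then var n else var (n + d)
  | k, abs t => abs (shift d (k + 1) t)
  | k, app t u => app (shift d k t) (shift d k u)

/-- Capture-avoiding substitution of `s` for index `k`. -/
def subst : Lam → ℕ → Lam → Lam
  | var n, k, s => if n = k then shift k 0 s else if k < n then var (n - 1) else var n
  | abs t, k, s => abs (subst t (k + 1) s)
  | app t u, k, s => app (subst t k s) (subst u k s)

/-- `t` is a λ-abstraction. -/
def IsAbs : Lam → Prop
  | abs _ => True
  | _ => False

/-- One-step head reduction: contraction of the head redex. -/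
inductive Head : Lam → Lam → Prop
  | beta (t u : Lam) : Head (app (abs t) u) (subst t 0 u)
  | mu {t t' : Lam} (u : Lam) : ¬ IsAbs t → Head t t' → Head (app t u) (app t' u)
  | xi {t t' : Lam} : Head t t' → Head (abs t) (abs t')

/-- Reflexive-transitive closure of head reduction. -/
def HeadStar : Lam → Lam → Prop := Relation.ReflTransGen Head

/-- Terms of the shape `y M₁ … Mₙ`. -/
inductive Neutral : Lam → Prop
  | head (n : ℕ) : Neutral (var n)
  | cons {t : Lam} (u : Lam) : Neutral t → Neutral (app t u)

/-- Head normal forms: terms of the shape `λx₁…xₖ. y M₁ … Mₙ`. -/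
inductive Hnf : Lam → Prop
  | neu {t : Lam} : Neutral t → Hnf t
  | lam {t : Lam} : Hnf t → Hnf (abs t)

/-- A term is solvable if head reduction reaches a head normal form. -/
def Solvable (M : Lam) : Prop := ∃ N, HeadStar M N ∧ Hnf N

def Unsolvable (M : Lam) : Prop := ¬ Solvable M

/-- `n` iterated abstractions. -/
def absIter : ℕ → Lam → Lam
  | 0, t => t
  | n + 1, t => abs (absIter n t)

/-- Head reduction can uncover at least `n` leading abstractions. -/
def UnravelsTo (M : Lam) (n : ℕ) : Prop := ∃ N, HeadStar M (absIter n N)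

/-- `M` is unsolvable of (finite) order `n`. -/
def UnsOrder (M : Lam) (n : ℕ) : Prop :=
  Unsolvable M ∧ UnravelsTo M n ∧ ¬ UnravelsTo M (n + 1)

/-- `M` is unsolvable of order `ω`. -/
def UnsOrderOmega (M : Lam) : Prop := Unsolvable M ∧ ∀ n, UnravelsTo M n

/-- The purely divergent term `Ω = (λx.xx)(λx.xx)`. -/
def Omega : Lam := app (abs (app (var 0) (var 0))) (abs (app (var 0) (var 0)))

/-- Call-by-name reduction: rules β and μ. -/
inductive Cbn : Lam → Lam → Prop
  | beta (t u : Lam) : Cbn (app (abs t) u) (subst t 0 u)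
  | mu {t t' : Lam} (u : Lam) : Cbn t t' → Cbn (app t u) (app t' u)

end Lam

open Lam

namespace Lam

theorem headstar_abs {t u : Lam} (h : HeadStar t u) : HeadStar (abs t) (abs u) :=
  Relation.ReflTransGen.lift (r := Head) (p := Head) abs (fun _ _ h => Head.xi h) _ _ h

def DD : Lam := abs (abs (app (var 1) (var 1)))
def WW : Lam := app DD DD

theorem head_WW : Head WW (abs WW) := by
  have h := Head.beta (abs (app (var 1) (var 1))) DD
  have he : subst (abs (app (var 1) (var 1))) 0 DD = abs WW := rfl
  rw [he] at h
  exact h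

theorem WW_step : ∀ k u, Head (absIter k WW) u → ∃ k', u = absIter k' WW := by
  intro k
  induction k with
  | zero =>
    intro u h
    simp only [absIter, WW, DD] at h
    cases h with
    | beta t u' => exact ⟨1, rfl⟩
    | mu _ hna _ => exact (hna trivial).elim
  | succ k ih =>
    intro u h
    cases h with
    | xi h' =>
      obtain ⟨k', rfl⟩ := ih _ h'
      exact ⟨k' + 1, rfl⟩

theorem WW_reducts {u : Lam} (h : HeadStar WW u) : ∃ k, u = absIter k WW := by
  induction h with
  | refl => exact ⟨0, rfl⟩
  | tail _ hstep ih =>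
    obtain ⟨k, rfl⟩ := ih
    exact WW_step k _ hstep

theorem not_hnf_absIter_WW : ∀ k, ¬ Hnf (absIter k WW) := by
  intro k
  induction k with
  | zero =>
    intro h
    simp only [absIter, WW, DD] at h
    cases h with
    | neu hn =>
      cases hn with
      | cons _ hn' => cases hn'
  | succ k ih =>
    intro h
    cases h with
    | neu hn => cases hn
    | lam h' => exact ih h'

theorem WW_unsolvable : Unsolvable WW := by
  rintro ⟨N, hs, hn⟩
  obtain ⟨k, rfl⟩ := WW_reducts hs
  exact not_hnf_absIter_WW k hn

theorem WW_unravels : ∀ n, UnravelsTo WW n := by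
  intro n
  refine ⟨WW, ?_⟩
  induction n with
  | zero => exact Relation.ReflTransGen.refl
  | succ n ih => exact Relation.ReflTransGen.head head_WW (headstar_abs ih)

theorem unsOrder_succ {M : Lam} {n : ℕ} (h : UnsOrder M (n + 1)) :
    ∃ P, HeadStar M (abs P) ∧ UnsOrder P n := by
  obtain ⟨huns, ⟨N, hstar⟩, hnot⟩ := h
  refine ⟨absIter n N, hstar, ?_, ⟨N, Relation.ReflTransGen.refl⟩, ?_⟩
  · rintro ⟨H, hsH, hH⟩
    exact huns ⟨abs H, Relation.ReflTransGen.trans hstar (headstar_abs hsH), Hnf.lam hH⟩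
  · rintro ⟨Q, hQ⟩
    exact hnot ⟨Q, Relation.ReflTransGen.trans hstar (headstar_abs hQ)⟩

theorem unsolvable_order {M : Lam} (h : Unsolvable M) :
    (∃ n, UnsOrder M n) ∨ UnsOrderOmega M := by
  by_cases hall : ∀ n, UnravelsTo M n
  · exact Or.inr ⟨h, hall⟩
  · left
    push_neg at hall
    classical
    have hex : ∃ n, ¬ UnravelsTo M n := hall
    have hk := Nat.find_spec hex
    have hk0 : Nat.find hex ≠ 0 := by
      intro h0
      rw [h0] at hk
      exact hk ⟨M, Relation.ReflTransGen.refl⟩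
    obtain ⟨m, hm⟩ := Nat.exists_eq_succ_of_ne_zero hk0
    refine ⟨m, h, ?_, ?_⟩
    · have := Nat.find_min hex (m := m) (by omega)
      exact not_not.mp this
    · rw [hm] at hk
      exact hk

end Lam

/-- If a compositional encoding and a congruence `R` validate rule β, and the
encodings of all unsolvables of order 0 and of order ω are related to `⟦Ω⟧`,
then the encoding of every unsolvable is related to `⟦Ω⟧`. -/
theorem unsolvable_encoding_omega
    {T : Type} (enc : Lam → T) (R : T → T → Prop)
    (Ctxs : Set (T → T))
    (hequiv : Equivalence R)
    (hcong : ∀ c ∈ Ctxs, ∀ p q, R p q → R (c p) (c q))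
    (Cl : T → T) (hCl : Cl ∈ Ctxs)
    (Ca : T → T → T)
    (hCa1 : ∀ q, (fun p => Ca p q) ∈ Ctxs)
    (hCa2 : ∀ p, (fun q => Ca p q) ∈ Ctxs)
    (hlam : ∀ M, enc (Lam.abs M) = Cl (enc M))
    (happ : ∀ M N, enc (Lam.app M N) = Ca (enc M) (enc N))
    (hbeta : ∀ M N, R (enc (Lam.app (Lam.abs M) N)) (enc (Lam.subst M 0 N)))
    (hzero : ∀ M, UnsOrder M 0 → R (enc M) (enc Omega))
    (homega : ∀ M, UnsOrderOmega M → R (enc M) (enc Omega)) :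
    ∀ M : Lam, Unsolvable M → R (enc M) (enc Omega) := by
  intro M hM
  have encHead : ∀ {A B : Lam}, Head A B → R (enc A) (enc B) := by
    intro A B h
    induction h with
    | beta t u => exact hbeta t u
    | mu u hna h ih =>
      rw [happ, happ]
      exact hcong _ (hCa1 (enc u)) _ _ ih
    | xi h ih =>
      rw [hlam, hlam]
      exact hcong _ hCl _ _ ih
  have encStar : ∀ {A B : Lam}, HeadStar A B → R (enc A) (enc B) := by
    intro A B h
    induction h with
    | refl => exact hequiv.refl _
    | tail _ hstep ih => exact hequiv.trans ih (encHead hstep)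
  have hW : R (enc WW) (enc Omega) := homega WW ⟨WW_unsolvable, WW_unravels⟩
  have hClOmega : R (Cl (enc Omega)) (enc Omega) := by
    have h1 : R (enc WW) (Cl (enc WW)) := by
      have h := encHead head_WW
      rwa [hlam] at h
    have h2 : R (Cl (enc WW)) (Cl (enc Omega)) := hcong _ hCl _ _ hW
    exact hequiv.trans (hequiv.symm h2) (hequiv.trans (hequiv.symm h1) hW)
  have key : ∀ n, ∀ M, UnsOrder M n → R (enc M) (enc Omega) := by
    intro n
    induction n with
    | zero => exact hzero
    | succ n ih =>
      intro M hM
      obtain ⟨P, hstar, hP⟩ := unsOrder_succ hM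
      have h1 : R (enc M) (Cl (enc P)) := by
        have h := encStar hstar
        rwa [hlam] at h
      have h2 := hcong _ hCl _ _ (ih P hP)
      exact hequiv.trans h1 (hequiv.trans h2 hClOmega)
  rcases unsolvable_order hM with ⟨n, hn⟩ | hw
  · exact key n M hn
  · exact homega M hw
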